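/- Let all parameters be positive reals with ε ∈ (0,1), L = log₂(1/ε), and suppose D := d·m₀·n₀² + 2κLω − 2L·m₀·n₀·ω > 0 and 1 ≤ γ̃ ≤ m₀ where γ̃ = 4κL·m₀·ω/D. Then C_N(γ̃) ≤ C_N(γ) for every γ ∈ [1, m₀], i.e. the minimum of the network-only cost over [1, m₀] is attained at the interior critical point γ̃. -/
import Mathlib


open Real Set Filter

theorem stmt7 (m₀ n₀ d κ ω θ ε L : ℝ)
    (hm : 1 < m₀) (hn : 0 < n₀) (hd : 0 < d) (hκ : 0 < κ) (hω : 0 < ω) (hθ : 0 < θ)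
    (hε : 0 < ε) (hε1 : ε < 1) (hL : L = Real.logb 2 (1/ε))
    (C_N : ℝ → ℝ)
    (hC : C_N = fun γ => 2*ω*θ*(m₀/γ - 1)*((1 + κ/(n₀*γ))*L) + θ*(m₀ - m₀/γ)*n₀*d)
    (hD : 0 < d*m₀*n₀^2 + 2*κ*L*ω - 2*L*m₀*n₀*ω) (hγ1 : 1 ≤ 4*κ*L*m₀*ω / (d*m₀*n₀^2 + 2*κ*L*ω - 2*L*m₀*n₀*ω)) (hγ2 : 4*κ*L*m₀*ω / (d*m₀*n₀^2 + 2*κ*L*ω - 2*L*m₀*n₀*ω) ≤ m₀) :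
    ∀ γ ∈ Set.Icc (1:ℝ) m₀, C_N (4*κ*L*m₀*ω / (d*m₀*n₀^2 + 2*κ*L*ω - 2*L*m₀*n₀*ω)) ≤ C_N γ := by
  have hε' : 1 < 1/ε := by rw [lt_div_iff₀ hε]; linarith
  have hL0 : 0 < L := by rw [hL]; exact Real.logb_pos one_lt_two hε'
  intro γ hγ
  obtain ⟨h1, h2⟩ := hγ
  have hγ0 : 0 < γ := by linarith
  set D := d*m₀*n₀^2 + 2*κ*L*ω - 2*L*m₀*n₀*ω with hDdef
  set g := 4*κ*L*m₀*ω / D with hgdef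
  have hg0 : 0 < g := by linarith
  have hm0 : 0 < m₀ := by linarith
  have hnum : 4*κ*L*m₀*ω ≠ 0 := by positivity
  have key : C_N γ - C_N g = (2*ω*θ*L*m₀*κ/n₀) * (1/γ - 1/g)^2 := by
    subst hC
    simp only [hgdef, one_div, div_div_eq_mul_div, div_pow]
    field_simp
    ring
  have hpos : 0 ≤ (2*ω*θ*L*m₀*κ/n₀) * (1/γ - 1/g)^2 := by positivity
  linarith [key, hpos]
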